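/- L¹ universal approximation by activated MPS: let σ : ℝ → ℝ be bounded and Borel measurable with σ(t) → 0 as t → −∞ and σ(t) → C as t → +∞, where C ≠ 0. Then the MPS network class M(σ) is dense in L¹([0,1]ⁿ) with respect to Lebesgue measure: for every f ∈ L¹([0,1]ⁿ) and every ε > 0 there exist L ∈ ℕ, coefficients c₁,…,c_L ∈ ℝ and multilinear polynomials p₁,…,p_L on ℝⁿ such that ∫_{[0,1]ⁿ} |Σ_{l=1}^{L} c_l σ(p_l(x)) − f(x)| dx < ε. -/

import Mathlib

open MeasureTheory

/-- A multilinear polynomial on `ℝⁿ`: `p(x) = Σ_{s ∈ {0,1}ⁿ} W_s ∏_{i : s i = 1} xᵢ`.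
These are exactly the contractions of an MPS whose site kernel maps are
`φ(xᵢ) = (xᵢ, 1)`. -/
def IsMultilinearPoly {n : ℕ} (p : (Fin n → ℝ) → ℝ) : Prop :=
  ∃ W : (Fin n → Bool) → ℝ,
    ∀ x : Fin n → ℝ,
      p x = ∑ s : Fin n → Bool, W s * ∏ i : Fin n, if s i then x i else 1


namespace MPS


lemma mlp_const {n : ℕ} (b : ℝ) : IsMultilinearPoly (fun _ : Fin n → ℝ => b) := by
  refine ⟨fun s => if s = (fun _ => false) then b else 0, fun x => ?_⟩
  rw [Finset.sum_eq_single (fun _ => false)]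
  · simp
  · intro s _ hs; simp [hs]
  · simp

lemma mlp_measurable {n : ℕ} {p : (Fin n → ℝ) → ℝ} (hp : IsMultilinearPoly p) :
    Measurable p := by
  obtain ⟨W, hW⟩ := hp
  have : p = fun x => ∑ s : Fin n → Bool, W s * ∏ i : Fin n, if s i then x i else 1 :=
    funext hW
  rw [this]
  refine Finset.measurable_sum _ fun s _ => measurable_const.mul
    (Finset.measurable_prod _ fun i _ => ?_)
  by_cases h : s i <;> simp [h]
  exact measurable_pi_apply i

lemma mlp_add {n : ℕ} {p q : (Fin n → ℝ) → ℝ} (hp : IsMultilinearPoly p)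
    (hq : IsMultilinearPoly q) : IsMultilinearPoly (fun x => p x + q x) := by
  obtain ⟨W1, h1⟩ := hp; obtain ⟨W2, h2⟩ := hq
  refine ⟨fun s => W1 s + W2 s, fun x => ?_⟩
  simp only [h1, h2, add_mul, Finset.sum_add_distrib]

lemma mlp_smul {n : ℕ} (c : ℝ) {p : (Fin n → ℝ) → ℝ} (hp : IsMultilinearPoly p) :
    IsMultilinearPoly (fun x => c * p x) := by
  obtain ⟨W, h⟩ := hp
  refine ⟨fun s => c * W s, fun x => ?_⟩
  simp only [h, Finset.mul_sum, mul_assoc]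

lemma mlp_coord {n : ℕ} (i : Fin n) : IsMultilinearPoly (fun x : Fin n → ℝ => x i) := by
  classical
  refine ⟨fun s => if s = (fun j => decide (j = i)) then 1 else 0, fun x => ?_⟩
  rw [Finset.sum_eq_single (fun j => decide (j = i))]
  · simp only [if_pos rfl, one_mul]
    rw [Finset.prod_eq_single i]
    · simp
    · intro b _ hb; simp [hb]
    · simp
  · intro s _ hs; simp [hs]
  · simp

lemma mlp_finset_sum {n : ℕ} {ι : Type*} (t : Finset ι) (f : ι → (Fin n → ℝ) → ℝ)
    (h : ∀ i ∈ t, IsMultilinearPoly (f i)) :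
    IsMultilinearPoly (fun x => ∑ i ∈ t, f i x) := by
  classical
  induction t using Finset.induction_on with
  | empty => simpa using mlp_const 0
  | insert a s hnot ih =>
    simp only [Finset.sum_insert hnot]
    exact mlp_add (h a (Finset.mem_insert_self a s))
      (ih fun i hi => h i (Finset.mem_insert_of_mem hi))

lemma mlp_affine {n : ℕ} (a : Fin n → ℝ) (b : ℝ) :
    IsMultilinearPoly (fun x : Fin n → ℝ => (∑ i, a i * x i) + b) := by
  exact mlp_add (mlp_finset_sum Finset.univ _ fun i _ => mlp_smul (a i) (mlp_coord i))
    (mlp_const b)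


variable {n : ℕ} (σ : ℝ → ℝ)


def Net (F : (Fin n → ℝ) → ℝ) : Prop :=
  ∃ (L : ℕ) (c : Fin L → ℝ) (p : Fin L → (Fin n → ℝ) → ℝ),
    (∀ l, IsMultilinearPoly (p l)) ∧ ∀ x, F x = ∑ l, c l * σ (p l x)

noncomputable abbrev K (n : ℕ) : Set (Fin n → ℝ) := Set.Icc 0 1

def Approx (f : (Fin n → ℝ) → ℝ) : Prop :=
  ∀ ε > 0, ∃ F, Net σ F ∧ (∫ x in K n, |F x - f x|) < ε

instance : IsFiniteMeasure ((volume : Measure (Fin n → ℝ)).restrict (K n)) :=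
  ⟨by rw [Measure.restrict_apply_univ]; exact isCompact_Icc.measure_lt_top⟩

lemma volume_K_le : ((volume : Measure (Fin n → ℝ)) (K n)).toReal ≤ 1 := by
  rw [Real.volume_Icc_pi]
  simp

variable {σ}

lemma net_zero : Net (n := n) σ (fun _ => 0) :=
  ⟨0, Fin.elim0, Fin.elim0, fun l => l.elim0, fun x => by simp⟩

lemma net_single {p : (Fin n → ℝ) → ℝ} (hp : IsMultilinearPoly p) (c : ℝ) :
    Net σ (fun x => c * σ (p x)) :=
  ⟨1, fun _ => c, fun _ => p, fun _ => hp, fun x => by simp⟩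

lemma net_add {F G : (Fin n → ℝ) → ℝ} (hF : Net σ F) (hG : Net σ G) :
    Net σ (fun x => F x + G x) := by
  obtain ⟨L1, c1, p1, hp1, h1⟩ := hF
  obtain ⟨L2, c2, p2, hp2, h2⟩ := hG
  refine ⟨L1 + L2, Fin.append c1 c2, Fin.append p1 p2, ?_, fun x => ?_⟩
  · intro l
    refine Fin.addCases (fun i => ?_) (fun i => ?_) l
    · rw [Fin.append_left]; exact hp1 i
    · rw [Fin.append_right]; exact hp2 i
  · rw [Fin.sum_univ_add]
    simp only [Fin.append_left, Fin.append_right]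
    rw [← h1, ← h2]

lemma net_measurable (hσm : Measurable σ) {F : (Fin n → ℝ) → ℝ} (hF : Net σ F) :
    Measurable F := by
  obtain ⟨L, c, p, hp, h⟩ := hF
  have : F = fun x => ∑ l, c l * σ (p l x) := funext h
  rw [this]
  exact Finset.measurable_sum _ fun l _ =>
    ((hσm.comp (mlp_measurable (hp l))).const_mul (c l))

lemma net_integrableOn (hσm : Measurable σ) (hσb : ∃ M, ∀ t, |σ t| ≤ M)
    {F : (Fin n → ℝ) → ℝ} (hF : Net σ F) : IntegrableOn F (K n) volume := by
  obtain ⟨M, hM⟩ := hσb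
  obtain ⟨L, c, p, hp, h⟩ := hF
  have hFm : Measurable F := net_measurable hσm ⟨L, c, p, hp, h⟩
  refine Integrable.mono' (integrable_const ((∑ l, |c l|) * M)) hFm.aestronglyMeasurable ?_
  refine Filter.Eventually.of_forall fun x => ?_
  rw [h x, Real.norm_eq_abs]
  calc |∑ l, c l * σ (p l x)| ≤ ∑ l, |c l * σ (p l x)| := Finset.abs_sum_le_sum_abs _ _
    _ ≤ ∑ l, |c l| * M := by
        refine Finset.sum_le_sum fun l _ => ?_
        rw [abs_mul]
        exact mul_le_mul_of_nonneg_left (hM _) (abs_nonneg _)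
    _ = (∑ l, |c l|) * M := by rw [Finset.sum_mul]

lemma approx_net {F : (Fin n → ℝ) → ℝ} (hF : Net σ F) : Approx σ F := by
  intro ε hε
  exact ⟨F, hF, by simpa using hε⟩

lemma integral_abs_triangle {f g h : (Fin n → ℝ) → ℝ}
    (hfg : IntegrableOn (fun x => f x - g x) (K n) volume)
    (hgh : IntegrableOn (fun x => g x - h x) (K n) volume) :
    (∫ x in K n, |f x - h x|) ≤ (∫ x in K n, |f x - g x|) + ∫ x in K n, |g x - h x| := by
  rw [← integral_add hfg.abs hgh.abs]
  refine integral_mono_of_nonneg (Filter.Eventually.of_forall fun x => abs_nonneg _)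
    (hfg.abs.add hgh.abs) (Filter.Eventually.of_forall fun x => ?_)
  calc |f x - h x| = |(f x - g x) + (g x - h x)| := by ring_nf
    _ ≤ |f x - g x| + |g x - h x| := abs_add_le _ _

variable (hσm : Measurable σ) (hσb : ∃ M, ∀ t, |σ t| ≤ M)
include hσm hσb

lemma approx_add {f g : (Fin n → ℝ) → ℝ} (haf : Approx σ f) (hag : Approx σ g)
    (hf : IntegrableOn f (K n) volume) (hg : IntegrableOn g (K n) volume) :
    Approx σ (fun x => f x + g x) := by
  intro ε hε
  obtain ⟨F, hF, hF2⟩ := haf (ε / 2) (by linarith)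
  obtain ⟨G, hG, hG2⟩ := hag (ε / 2) (by linarith)
  refine ⟨fun x => F x + G x, net_add hF hG, ?_⟩
  have hA : IntegrableOn (fun x => F x - f x) (K n) volume :=
    (net_integrableOn hσm hσb hF).sub hf
  have hB : IntegrableOn (fun x => G x - g x) (K n) volume :=
    (net_integrableOn hσm hσb hG).sub hg
  have h1 : (∫ x in K n, |F x + G x - (f x + g x)|)
      ≤ (∫ x in K n, |F x - f x|) + ∫ x in K n, |G x - g x| := by
    rw [← integral_add hA.abs hB.abs]
    refine integral_mono_of_nonneg (Filter.Eventually.of_forall fun x => abs_nonneg _)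
      (hA.abs.add hB.abs)
      (Filter.Eventually.of_forall fun x => ?_)
    calc |F x + G x - (f x + g x)| = |(F x - f x) + (G x - g x)| := by ring_nf
      _ ≤ |F x - f x| + |G x - g x| := abs_add_le _ _
  linarith

lemma approx_smul (c : ℝ) {f : (Fin n → ℝ) → ℝ} (haf : Approx σ f) :
    Approx σ (fun x => c * f x) := by
  intro ε hε
  obtain ⟨F, hF, hF2⟩ := haf (ε / (|c| + 1)) (by positivity)
  obtain ⟨L, cc, p, hp, h⟩ := hF
  refine ⟨fun x => c * F x, ⟨L, fun l => c * cc l, p, hp, fun x => by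
    simp only [h x, Finset.mul_sum, mul_assoc]⟩, ?_⟩
  have : ∀ x, |c * F x - c * f x| = |c| * |F x - f x| := by
    intro x; rw [← abs_mul]; ring_nf
  calc (∫ x in K n, |c * F x - c * f x|) = ∫ x in K n, |c| * |F x - f x| := by
        simp_rw [this]
    _ = |c| * ∫ x in K n, |F x - f x| := integral_const_mul _ _
    _ ≤ |c| * (ε / (|c| + 1)) := by
        refine mul_le_mul_of_nonneg_left hF2.le (abs_nonneg _)
    _ < ε := by
        rw [mul_div_assoc']
        rw [div_lt_iff₀ (by positivity)]
        nlinarith [abs_nonneg c]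

lemma approx_close {f : (Fin n → ℝ) → ℝ} (hf : IntegrableOn f (K n) volume)
    (h : ∀ δ > 0, ∃ g, IntegrableOn g (K n) volume ∧ Approx σ g ∧
      (∫ x in K n, |g x - f x|) < δ) : Approx σ f := by
  intro ε hε
  obtain ⟨g, hgi, hga, hgc⟩ := h (ε / 2) (by linarith)
  obtain ⟨F, hF, hF2⟩ := hga (ε / 2) (by linarith)
  refine ⟨F, hF, lt_of_le_of_lt (integral_abs_triangle
    ((net_integrableOn hσm hσb hF).sub hgi : IntegrableOn (fun x => F x - g x) (K n) volume)
    (hgi.sub hf : IntegrableOn (fun x => g x - f x) (K n) volume)) (by linarith)⟩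



omit hσm hσb in
lemma hyperplane_null {a : Fin n → ℝ} (ha : a ≠ 0) (θ : ℝ) :
    volume {x : Fin n → ℝ | (∑ i, a i * x i) = θ} = 0 := by
  obtain ⟨i0, hi0⟩ : ∃ i, a i ≠ 0 := by
    by_contra h; push_neg at h; exact ha (funext fun i => h i)
  set l : (Fin n → ℝ) →ₗ[ℝ] ℝ :=
    { toFun := fun x => ∑ i, a i * x i
      map_add' := fun x y => by
        simp only [Pi.add_apply, mul_add, Finset.sum_add_distrib]
      map_smul' := fun c x => by
        simp only [Pi.smul_apply, smul_eq_mul, RingHom.id_apply, Finset.mul_sum]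
        exact Finset.sum_congr rfl fun i _ => by ring } with hldef
  have hl : ∀ x, l x = ∑ i, a i * x i := fun _ => rfl
  have hsingle : l (Pi.single i0 1) = a i0 := by
    rw [hl, Finset.sum_eq_single i0]
    · simp
    · intro b _ hb; simp [Pi.single_eq_of_ne hb]
    · simp
  have hker : LinearMap.ker l ≠ ⊤ := by
    intro h
    have h1 : Pi.single i0 1 ∈ LinearMap.ker l := by rw [h]; trivial
    rw [LinearMap.mem_ker, hsingle] at h1
    exact hi0 h1
  set x0 : Fin n → ℝ := (θ / a i0) • (Pi.single i0 1 : Fin n → ℝ) with hx0def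
  have hx0 : l x0 = θ := by
    rw [hx0def, l.map_smul, hsingle, smul_eq_mul, div_mul_cancel₀ _ hi0]
  have hset : {x : Fin n → ℝ | (∑ i, a i * x i) = θ}
      = (fun x => x + (-x0)) ⁻¹' (LinearMap.ker l : Set (Fin n → ℝ)) := by
    ext x
    simp only [Set.mem_setOf_eq, Set.mem_preimage, SetLike.mem_coe, LinearMap.mem_ker,
      map_add, map_neg, hx0, ← hl x]
    constructor
    · intro h; rw [h]; ring
    · intro h; linarith
  rw [hset, measure_preimage_add_right]
  exact Measure.addHaar_submodule volume _ hker

section analytic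

variable {C : ℝ} (hC : C ≠ 0)
variable (hbot : Filter.Tendsto σ Filter.atBot (nhds 0))
variable (htop : Filter.Tendsto σ Filter.atTop (nhds C))

omit hσm hσb in
include hC htop in
lemma approx_const (b : ℝ) : Approx σ (fun _ : Fin n → ℝ => b) := by
  obtain ⟨t0, ht0⟩ := (htop.eventually_ne hC).exists
  intro ε hε
  refine ⟨fun x => (b / σ t0) * σ ((fun _ => t0) x), net_single (mlp_const t0) _, ?_⟩
  simpa [div_mul_cancel₀ _ ht0] using hε

include hσm hσb hC hbot htop in
lemma approx_step (a : Fin n → ℝ) (ha : a ≠ 0) (θ d : ℝ) :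
    Approx σ (fun x => if θ < ∑ i, a i * x i then d else 0) := by
  intro ε hε
  obtain ⟨M, hM⟩ := hσb
  set u : (Fin n → ℝ) → ℝ := fun x => ∑ i, a i * x i with hu
  set g : (Fin n → ℝ) → ℝ := fun x => if θ < u x then d else 0 with hg
  have hum : Measurable u := Finset.measurable_sum _ fun i _ =>
    by fun_prop
  have hgm : Measurable g := Measurable.ite (measurableSet_lt measurable_const hum)
    measurable_const measurable_const
  set p : ℕ → (Fin n → ℝ) → ℝ :=
    fun k x => (∑ i, ((k : ℝ) * a i) * x i) + (-((k : ℝ) * θ)) with hp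
  have hpk : ∀ (k : ℕ) x, p k x = (k : ℝ) * (u x - θ) := by
    intro k x
    rw [hp]
    simp only [hu, mul_sub, Finset.mul_sum]
    rw [← Finset.sum_congr rfl fun i (_ : i ∈ Finset.univ) => mul_assoc ((k:ℝ)) (a i) (x i)]
    ring
  set F : ℕ → (Fin n → ℝ) → ℝ := fun k x => (d / C) * σ (p k x) with hF
  have hnet : ∀ k, Net σ (F k) := fun k => net_single (mlp_affine _ _) (d / C)
  have hae : ∀ᵐ x ∂((volume : Measure (Fin n → ℝ)).restrict (K n)), u x ≠ θ := by
    refine ae_restrict_of_ae ?_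
    rw [ae_iff]
    have h0 : volume {x : Fin n → ℝ | u x = θ} = 0 := hyperplane_null ha θ
    have hseq : {x : Fin n → ℝ | ¬u x ≠ θ} = {x | u x = θ} := by ext x; simp
    rw [hseq]
    exact h0
  have hconv : Filter.Tendsto (fun k => ∫ x in K n, |F k x - g x|) Filter.atTop (nhds 0) := by
    have h0 : (0 : ℝ) = ∫ (_ : Fin n → ℝ) in K n, (0 : ℝ) := by simp
    rw [h0]
    refine tendsto_integral_of_dominated_convergence (fun _ => |d / C| * M + |d|)
      (fun k => ?_) (integrable_const _) (fun k => ?_) ?_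
    · exact ((((hσm.comp (mlp_measurable (mlp_affine _ _))).const_mul (d / C)).sub
        hgm).abs).aestronglyMeasurable
    · refine Filter.Eventually.of_forall fun x => ?_
      rw [Real.norm_eq_abs, abs_abs]
      calc |F k x - g x| ≤ |F k x| + |g x| := abs_sub _ _
        _ ≤ |d / C| * M + |d| := by
            refine add_le_add ?_ ?_
            · rw [hF]; rw [abs_mul]
              exact mul_le_mul_of_nonneg_left (hM _) (abs_nonneg _)
            · rw [hg]; dsimp only
              split <;> simp [le_abs_self, abs_nonneg]
    · filter_upwards [hae] with x hx
      have habs : ∀ (v : ℝ), Filter.Tendsto (fun k => F k x) Filter.atTop (nhds v) →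
          g x = v → Filter.Tendsto (fun k => |F k x - g x|) Filter.atTop (nhds 0) := by
        intro v hv hgv
        rw [hgv]
        have h2 := (hv.sub (tendsto_const_nhds (x := v))).abs
        rw [sub_self, abs_zero] at h2
        exact h2
      rcases lt_or_gt_of_ne hx with hlt | hgt
      · -- u x < θ : argument → -∞, σ → 0, F → 0, g = 0
        have harg : Filter.Tendsto (fun k : ℕ => p k x) Filter.atTop Filter.atBot := by
          simp only [hpk]
          exact tendsto_natCast_atTop_atTop.atTop_mul_const_of_neg' (by linarith)
        refine habs 0 ?_ ?_
        · have h3 := Filter.Tendsto.const_mul (d / C) (hbot.comp harg)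
          simpa using h3
        · rw [hg]; simp only [if_neg (not_lt.mpr hlt.le)]
      · -- θ < u x
        have harg : Filter.Tendsto (fun k : ℕ => p k x) Filter.atTop Filter.atTop := by
          simp only [hpk]
          exact tendsto_natCast_atTop_atTop.atTop_mul_const' (by linarith)
        refine habs d ?_ ?_
        · have h3 := Filter.Tendsto.const_mul (d / C) (htop.comp harg)
          rw [div_mul_cancel₀ _ hC] at h3
          exact h3
        · rw [hg]; simp only [if_pos hgt]
  obtain ⟨k, hk⟩ := (hconv.eventually_lt_const hε).exists
  exact ⟨F k, hnet k, hk⟩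

omit hσm hσb hC hbot htop in
lemma cos_lip (p q : ℝ) : |Real.cos p - Real.cos q| ≤ |p - q| := by
  rw [Real.cos_sub_cos, abs_mul, abs_mul]
  have h1 : |Real.sin ((p + q) / 2)| ≤ 1 :=
    abs_le.mpr ⟨Real.neg_one_le_sin _, Real.sin_le_one _⟩
  have h2 : |Real.sin ((p - q) / 2)| ≤ |(p - q) / 2| := Real.abs_sin_le_abs
  have h3 : |(p - q) / 2| = |p - q| / 2 := by rw [abs_div]; norm_num
  rw [h3] at h2
  have : |(-2 : ℝ)| = 2 := by norm_num
  rw [this]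
  nlinarith [abs_nonneg (Real.sin ((p + q) / 2)), abs_nonneg (p - q)]

omit hσm hσb hC hbot htop in
lemma cos_step_bound (b R : ℝ) (hR : 0 < R) (N : ℕ) (hN : 0 < N) (v : ℝ) (hv : |v| ≤ R) :
    |Real.cos (-R + b) + (∑ j ∈ Finset.range N,
      (Real.cos ((-R + ((j : ℝ) + 1) * (2 * R / N)) + b)
        - Real.cos ((-R + (j : ℝ) * (2 * R / N)) + b)) *
        (if -R + (j : ℝ) * (2 * R / N) < v then 1 else 0)) - Real.cos (v + b)|
      ≤ 2 * R / N := by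
  set h : ℝ := 2 * R / N with hh
  have hhpos : 0 < h := by positivity
  set g : ℕ → ℝ := fun j => Real.cos ((-R + (j : ℝ) * h) + b) with hgdef
  set J : ℕ := ⌈(v + R) / h⌉₊ with hJ
  have hiff : ∀ j : ℕ, (-R + (j : ℝ) * h < v ↔ j < J) := by
    intro j
    rw [hJ, Nat.lt_ceil, lt_div_iff₀ hhpos]
    constructor <;> intro hx <;> linarith
  have hJN : J ≤ N := by
    rw [hJ]
    refine Nat.ceil_le.mpr ?_
    rw [div_le_iff₀ hhpos, hh]
    have : (N : ℝ) * (2 * R / N) = 2 * R := by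
      field_simp
    rw [this]
    have := abs_le.mp hv
    linarith [this.2]
  have hsum : (∑ j ∈ Finset.range N,
      (g (j + 1) - g j) * (if -R + (j : ℝ) * h < v then 1 else 0)) = g J - g 0 := by
    have e1 : ∀ j ∈ Finset.range N,
        (g (j + 1) - g j) * (if -R + (j : ℝ) * h < v then 1 else 0)
          = if j < J then g (j + 1) - g j else 0 := by
      intro j _
      by_cases hc : j < J
      · rw [if_pos ((hiff j).mpr hc), if_pos hc, mul_one]
      · rw [if_neg (fun hcc => hc ((hiff j).mp hcc)), if_neg hc, mul_zero]
    rw [Finset.sum_congr rfl e1]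
    rw [← Finset.sum_subset (Finset.range_subset_range.mpr hJN)
      (fun j _ hj2 => if_neg (by simpa [Finset.mem_range] using hj2))]
    rw [Finset.sum_congr rfl (fun j hj => if_pos (Finset.mem_range.mp hj))]
    exact Finset.sum_range_sub g J
  have hvle : v ≤ -R + (J : ℝ) * h := by
    have := Nat.le_ceil ((v + R) / h)
    rw [← hJ] at this
    rw [div_le_iff₀ hhpos] at this
    linarith
  have hlt : -R + (J : ℝ) * h ≤ v + h := by
    rcases Nat.eq_zero_or_pos J with h0 | hpos
    · rw [h0]
      simp only [Nat.cast_zero, zero_mul, add_zero]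
      have := abs_le.mp hv
      linarith [this.1]
    · have h1 : J - 1 < J := by omega
      have h2 := (hiff (J - 1)).mpr h1
      rw [Nat.cast_sub (by omega : 1 ≤ J)] at h2
      push_cast at h2
      nlinarith
  have hfinal : |g J - Real.cos (v + b)| ≤ h := by
    show |Real.cos ((-R + (J : ℝ) * h) + b) - Real.cos (v + b)| ≤ h
    refine le_trans (cos_lip _ _) ?_
    rw [abs_le]
    constructor <;> [skip; skip] <;>
      · have : (-R + (J : ℝ) * h + b) - (v + b) = (-R + (J : ℝ) * h) - v := by ring
        rw [this]
        linarith
  calc |Real.cos (-R + b) + (∑ j ∈ Finset.range N,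
      (Real.cos ((-R + ((j : ℝ) + 1) * h) + b) - Real.cos ((-R + (j : ℝ) * h) + b)) *
        (if -R + (j : ℝ) * h < v then 1 else 0)) - Real.cos (v + b)|
      = |g J - Real.cos (v + b)| := by
        have e2 : (∑ j ∈ Finset.range N,
            (Real.cos ((-R + ((j : ℝ) + 1) * h) + b) - Real.cos ((-R + (j : ℝ) * h) + b)) *
            (if -R + (j : ℝ) * h < v then 1 else 0))
            = ∑ j ∈ Finset.range N,
              (g (j + 1) - g j) * (if -R + (j : ℝ) * h < v then 1 else 0) := by
          refine Finset.sum_congr rfl fun j _ => ?_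
          rw [hgdef]
          push_cast
          ring_nf
        rw [e2, hsum]
        have : Real.cos (-R + b) = g 0 := by rw [hgdef]; norm_num
        rw [this]
        ring_nf
    _ ≤ h := hfinal

omit hC hbot htop in
include hσm hσb in
lemma approx_finset_sum {ι : Type*} (t : Finset ι) (f : ι → (Fin n → ℝ) → ℝ)
    (hint : ∀ i ∈ t, IntegrableOn (f i) (K n) volume)
    (ha : ∀ i ∈ t, Approx σ (f i)) :
    Approx σ (fun x => ∑ i ∈ t, f i x) := by
  classical
  induction t using Finset.induction_on with
  | empty =>
    have : (fun _ : Fin n → ℝ => (0 : ℝ)) = fun x : Fin n → ℝ => ∑ i ∈ (∅ : Finset ι), f i x := by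
      funext x; simp
    exact this ▸ approx_net net_zero
  | insert a t hnot ih =>
    have h1 : Approx σ (fun x => f a x + ∑ i ∈ t, f i x) :=
      approx_add hσm hσb (ha a (Finset.mem_insert_self a t))
        (ih (fun i hi => hint i (Finset.mem_insert_of_mem hi))
          (fun i hi => ha i (Finset.mem_insert_of_mem hi)))
        (hint a (Finset.mem_insert_self a t))
        (integrable_finset_sum t (fun i hi => hint i (Finset.mem_insert_of_mem hi)))
    have : (fun x : Fin n → ℝ => ∑ i ∈ insert a t, f i x)
        = fun x => f a x + ∑ i ∈ t, f i x := by
      funext x; rw [Finset.sum_insert hnot]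
    rw [this]
    exact h1

omit hσm hσb hC hbot htop in
lemma step_integrableOn (a : Fin n → ℝ) (θ d : ℝ) :
    IntegrableOn (fun x : Fin n → ℝ => if θ < ∑ i, a i * x i then d else 0) (K n) volume := by
  have hum : Measurable fun x : Fin n → ℝ => ∑ i, a i * x i :=
    Finset.measurable_sum _ fun i _ => by fun_prop
  have hm : Measurable fun x : Fin n → ℝ => if θ < ∑ i, a i * x i then d else 0 :=
    Measurable.ite (measurableSet_lt measurable_const hum) measurable_const measurable_const
  refine Integrable.mono' (integrable_const |d|) hm.aestronglyMeasurable
    (Filter.Eventually.of_forall fun x => ?_)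
  rw [Real.norm_eq_abs]
  split
  · exact le_refl _
  · simp

include hσm hσb hC hbot htop in
lemma approx_ridge (a : Fin n → ℝ) (b : ℝ) :
    Approx σ (fun x => Real.cos ((∑ i, a i * x i) + b)) := by
  by_cases ha : a = 0
  · have he : (fun x : Fin n → ℝ => Real.cos ((∑ i, a i * x i) + b))
        = fun _ => Real.cos b := by
      funext x; rw [ha]; simp
    rw [he]; exact approx_const hC htop _
  · set u : (Fin n → ℝ) → ℝ := fun x => ∑ i, a i * x i with hu
    have hum : Measurable u := Finset.measurable_sum _ fun i _ =>
      by fun_prop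
    have huc : Continuous u := continuous_finset_sum _ fun i _ =>
      continuous_const.mul (continuous_apply i)
    have hfc : Continuous fun x => Real.cos (u x + b) :=
      Real.continuous_cos.comp (huc.add continuous_const)
    have hfi : IntegrableOn (fun x => Real.cos (u x + b)) (K n) volume :=
      hfc.continuousOn.integrableOn_compact isCompact_Icc
    set R : ℝ := ∑ i, |a i| with hR
    have hRpos : 0 < R := by
      obtain ⟨i0, hi0⟩ : ∃ i, a i ≠ 0 := by
        by_contra hcc; push_neg at hcc; exact ha (funext fun i => hcc i)
      have h1 : |a i0| ≤ R := Finset.single_le_sum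
        (f := fun i => |a i|) (fun i _ => abs_nonneg _) (Finset.mem_univ i0)
      have h2 : 0 < |a i0| := abs_pos.mpr hi0
      linarith
    have hvb : ∀ x ∈ K n, |u x| ≤ R := by
      intro x hx
      rw [hu, hR]
      refine le_trans (Finset.abs_sum_le_sum_abs _ _) (Finset.sum_le_sum fun i _ => ?_)
      rw [abs_mul]
      have hx1 : (0 : Fin n → ℝ) ≤ x := hx.1
      have hx2 : x ≤ 1 := hx.2
      have h0i : (0:ℝ) ≤ x i := by have := Pi.le_def.mp hx1 i; simpa using this
      have h1i : x i ≤ 1 := by have := Pi.le_def.mp hx2 i; simpa using this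
      have h1 : |x i| ≤ 1 := abs_le.mpr ⟨by linarith, h1i⟩
      calc |a i| * |x i| ≤ |a i| * 1 := mul_le_mul_of_nonneg_left h1 (abs_nonneg _)
        _ = |a i| := mul_one _
    refine approx_close hσm hσb hfi ?_
    intro δ hδ
    obtain ⟨N, hNgt⟩ := exists_nat_gt (2 * R / δ)
    have hN0 : 0 < N := by
      rcases Nat.eq_zero_or_pos N with h0 | h
      · exfalso
        rw [h0] at hNgt
        push_cast at hNgt
        have : 0 < 2 * R / δ := by positivity
        linarith
      · exact h
    have hmesh : 2 * R / N < δ := by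
      rw [div_lt_iff₀ (by positivity : (0:ℝ) < (N:ℝ))]
      rw [div_lt_iff₀ hδ] at hNgt
      nlinarith
    set s : (Fin n → ℝ) → ℝ := fun x => Real.cos (-R + b) + ∑ j ∈ Finset.range N,
      (Real.cos ((-R + ((j : ℝ) + 1) * (2 * R / N)) + b)
        - Real.cos ((-R + (j : ℝ) * (2 * R / N)) + b)) *
        (if -R + (j : ℝ) * (2 * R / N) < u x then 1 else 0) with hs
    have hterm : ∀ j : ℕ, (fun x : Fin n → ℝ =>
        (Real.cos ((-R + ((j : ℝ) + 1) * (2 * R / N)) + b)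
          - Real.cos ((-R + (j : ℝ) * (2 * R / N)) + b)) *
          (if -R + (j : ℝ) * (2 * R / N) < u x then 1 else 0))
        = fun x : Fin n → ℝ => if -R + (j : ℝ) * (2 * R / N) < ∑ i, a i * x i then
            (Real.cos ((-R + ((j : ℝ) + 1) * (2 * R / N)) + b)
              - Real.cos ((-R + (j : ℝ) * (2 * R / N)) + b)) else 0 := by
      intro j
      funext x
      rw [mul_ite, mul_one, mul_zero]
    have hsint : IntegrableOn s (K n) volume := by
      refine (integrable_const _).add (integrable_finset_sum _ fun j _ => ?_)
      rw [hterm j]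
      exact step_integrableOn _ _ _
    have hsapp : Approx σ s := by
      rw [hs]
      refine approx_add hσm hσb (approx_const hC htop _) ?_
        (integrable_const _) ?_
      · refine approx_finset_sum hσm hσb _ _ (fun j _ => ?_) (fun j _ => ?_)
        · rw [hterm j]; exact step_integrableOn _ _ _
        · rw [hterm j]
          exact approx_step hσm hσb hC hbot htop a ha _ _
      · exact integrable_finset_sum _ fun j _ => (hterm j) ▸ step_integrableOn a _ _
    refine ⟨s, hsint, hsapp, ?_⟩
    have hbnd : ∀ᵐ x ∂((volume : Measure (Fin n → ℝ)).restrict (K n)),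
        |s x - Real.cos (u x + b)| ≤ 2 * R / N := by
      refine (ae_restrict_iff' measurableSet_Icc).mpr (Filter.Eventually.of_forall fun x hx => ?_)
      exact cos_step_bound b R hRpos N hN0 (u x) (hvb x hx)
    calc (∫ x in K n, |s x - Real.cos (u x + b)|)
        ≤ ∫ _x in K n, 2 * R / N :=
          integral_mono_ae ((hsint.sub hfi).abs) (integrable_const _) hbnd
      _ = ((volume : Measure (Fin n → ℝ)) (K n)).toReal * (2 * R / N) := by
          rw [setIntegral_const, smul_eq_mul, Measure.real]
      _ ≤ 1 * (2 * R / N) := by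
          refine mul_le_mul_of_nonneg_right volume_K_le (by positivity)
      _ < δ := by rw [one_mul]; exact hmesh

end analytic

section sw

variable {n : ℕ}

instance : CompactSpace ↥(K n) := isCompact_iff_compactSpace.mp isCompact_Icc

/-- Generator: restriction to the cube of `x ↦ cos (a·x + b)`. -/
noncomputable def gen (a : Fin n → ℝ) (b : ℝ) : C(↥(K n), ℝ) :=
  ⟨fun x => Real.cos ((∑ i, a i * (x : Fin n → ℝ) i) + b), by
    refine Real.continuous_cos.comp (Continuous.add ?_ continuous_const)
    exact continuous_finset_sum _ fun i _ =>
      continuous_const.mul ((continuous_apply i).comp continuous_subtype_val)⟩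

def trigSet (n : ℕ) : Set C(↥(K n), ℝ) := {g | ∃ a b, g = gen a b}

omit hσm hσb in
lemma cos_mul_cos' (P Q : ℝ) :
    Real.cos P * Real.cos Q = 1 / 2 * Real.cos (P + Q) + 1 / 2 * Real.cos (P - Q) := by
  rw [Real.cos_add, Real.cos_sub]; ring

omit hσm hσb in
lemma gen_mul_gen (a a' : Fin n → ℝ) (b b' : ℝ) :
    gen a b * gen a' b' = (1 / 2 : ℝ) • gen (a + a') (b + b')
      + (1 / 2 : ℝ) • gen (a - a') (b - b') := by
  ext x
  simp only [ContinuousMap.mul_apply, ContinuousMap.add_apply, ContinuousMap.smul_apply,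
    smul_eq_mul, gen, ContinuousMap.coe_mk]
  have e1 : (∑ i, (a + a') i * (x : Fin n → ℝ) i)
      = (∑ i, a i * (x : Fin n → ℝ) i) + ∑ i, a' i * (x : Fin n → ℝ) i := by
    rw [← Finset.sum_add_distrib]
    exact Finset.sum_congr rfl fun i _ => by simp [add_mul]
  have e2 : (∑ i, (a - a') i * (x : Fin n → ℝ) i)
      = (∑ i, a i * (x : Fin n → ℝ) i) - ∑ i, a' i * (x : Fin n → ℝ) i := by
    rw [← Finset.sum_sub_distrib]
    exact Finset.sum_congr rfl fun i _ => by simp [sub_mul]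
  rw [e1, e2]
  set A := (∑ i, a i * (x : Fin n → ℝ) i) with hA
  set B := (∑ i, a' i * (x : Fin n → ℝ) i) with hB
  rw [show A + B + (b + b') = (A + b) + (B + b') from by ring,
    show A - B + (b - b') = (A + b) - (B + b') from by ring, cos_mul_cos']

omit hσm hσb in
lemma mul_mem_trigSpan {x y : C(↥(K n), ℝ)}
    (hx : x ∈ Submodule.span ℝ (trigSet n)) (hy : y ∈ Submodule.span ℝ (trigSet n)) :
    x * y ∈ Submodule.span ℝ (trigSet n) := by
  induction hx using Submodule.span_induction with
  | mem g hg =>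
    induction hy using Submodule.span_induction with
    | mem g' hg' =>
      obtain ⟨a, b, rfl⟩ := hg
      obtain ⟨a', b', rfl⟩ := hg'
      rw [gen_mul_gen]
      exact Submodule.add_mem _
        (Submodule.smul_mem _ _ (Submodule.subset_span ⟨_, _, rfl⟩))
        (Submodule.smul_mem _ _ (Submodule.subset_span ⟨_, _, rfl⟩))
    | zero => rw [mul_zero]; exact Submodule.zero_mem _
    | add u v _ _ hu hv => rw [mul_add]; exact Submodule.add_mem _ hu hv
    | smul c u _ hu => rw [mul_smul_comm]; exact Submodule.smul_mem _ _ hu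
  | zero => rw [zero_mul]; exact Submodule.zero_mem _
  | add u v _ _ hu hv => rw [add_mul]; exact Submodule.add_mem _ hu hv
  | smul c u _ hu => rw [smul_mul_assoc]; exact Submodule.smul_mem _ _ hu

omit hσm hσb in
lemma one_mem_trigSet : (1 : C(↥(K n), ℝ)) ∈ trigSet n := by
  refine ⟨0, 0, ?_⟩
  ext x
  simp [gen]

omit hσm hσb in
lemma adjoin_le_span : (Algebra.adjoin ℝ (trigSet n) : Set C(↥(K n), ℝ))
    ⊆ (Submodule.span ℝ (trigSet n) : Set C(↥(K n), ℝ)) := by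
  intro g hg
  simp only [SetLike.mem_coe] at hg ⊢
  induction hg using Algebra.adjoin_induction with
  | mem g hg => exact Submodule.subset_span hg
  | algebraMap r =>
    have : (algebraMap ℝ C(↥(K n), ℝ)) r = r • (1 : C(↥(K n), ℝ)) := by
      rw [Algebra.algebraMap_eq_smul_one]
    rw [this]
    exact Submodule.smul_mem _ _ (Submodule.subset_span one_mem_trigSet)
  | add u v _ _ hu hv => exact Submodule.add_mem _ hu hv
  | mul u v _ _ hu hv => exact mul_mem_trigSpan hu hv

omit hσm hσb in
lemma trig_separates : (Algebra.adjoin ℝ (trigSet n)).SeparatesPoints := by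
  intro x y hxy
  obtain ⟨i, hi⟩ : ∃ i, (x : Fin n → ℝ) i ≠ (y : Fin n → ℝ) i := by
    by_contra hcc
    push_neg at hcc
    exact hxy (Subtype.ext (funext hcc))
  set d : ℝ := (y : Fin n → ℝ) i - (x : Fin n → ℝ) i with hd
  have hdne : d ≠ 0 := sub_ne_zero.mpr (Ne.symm hi)
  set a : Fin n → ℝ := fun j => if j = i then Real.pi / d else 0 with ha
  set b : ℝ := -(Real.pi / d * (x : Fin n → ℝ) i) with hb
  have hsum : ∀ z : ↥(K n), (∑ j, a j * (z : Fin n → ℝ) j)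
      = Real.pi / d * (z : Fin n → ℝ) i := by
    intro z
    rw [ha, Finset.sum_eq_single i]
    · simp
    · intro j _ hj; simp [hj]
    · simp
  refine ⟨(gen a b : C(↥(K n), ℝ)), ⟨gen a b, Algebra.subset_adjoin ⟨a, b, rfl⟩, rfl⟩, ?_⟩
  have hx1 : (gen a b) x = 1 := by
    simp only [gen, ContinuousMap.coe_mk, hsum x, hb]
    rw [show Real.pi / d * (x : Fin n → ℝ) i + -(Real.pi / d * (x : Fin n → ℝ) i) = 0 by ring,
      Real.cos_zero]
  have hy1 : (gen a b) y = -1 := by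
    simp only [gen, ContinuousMap.coe_mk, hsum y, hb]
    rw [show Real.pi / d * (y : Fin n → ℝ) i + -(Real.pi / d * (x : Fin n → ℝ) i)
        = Real.pi / d * d from by rw [hd]; ring, div_mul_cancel₀ _ hdne, Real.cos_pi]
  intro hcc
  rw [hx1, hy1] at hcc
  norm_num at hcc

end sw

section final

variable {n : ℕ} {C : ℝ} (hC : C ≠ 0)
variable (hbot : Filter.Tendsto σ Filter.atBot (nhds 0))
variable (htop : Filter.Tendsto σ Filter.atTop (nhds C))

include hσm hσb hC hbot htop in
lemma approx_continuous (g : (Fin n → ℝ) → ℝ) (hg : Continuous g) : Approx σ g := by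
  refine approx_close hσm hσb (hg.continuousOn.integrableOn_compact isCompact_Icc) ?_
  intro δ hδ
  set gX : C(↥(K n), ℝ) := ⟨fun x => g x, hg.comp continuous_subtype_val⟩ with hgX
  have hcl := ContinuousMap.subalgebra_topologicalClosure_eq_top_of_separatesPoints
    (Algebra.adjoin ℝ (trigSet n)) trig_separates
  have hmem : gX ∈ (Algebra.adjoin ℝ (trigSet n)).topologicalClosure := by
    rw [hcl]; trivial
  have hmem2 : gX ∈ closure ((Algebra.adjoin ℝ (trigSet n)) : Set C(↥(K n), ℝ)) := hmem
  obtain ⟨t, htA, htd⟩ := Metric.mem_closure_iff.mp hmem2 (δ / 2) (by linarith)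
  have htspan : t ∈ Submodule.span ℝ (trigSet n) := adjoin_le_span htA
  obtain ⟨m, c, v, hvsum⟩ := Submodule.mem_span_set'.mp htspan
  choose aa bb hab using fun i => (v i).2
  set T : (Fin n → ℝ) → ℝ :=
    fun x => ∑ i : Fin m, c i * Real.cos ((∑ j, aa i j * x j) + bb i) with hT
  have hTi : ∀ i : Fin m, IntegrableOn
      (fun x : Fin n → ℝ => c i * Real.cos ((∑ j, aa i j * x j) + bb i)) (K n) volume := by
    intro i
    refine (Continuous.continuousOn ?_).integrableOn_compact isCompact_Icc
    exact continuous_const.mul (Real.continuous_cos.comp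
      ((continuous_finset_sum _ fun j _ => continuous_const.mul (continuous_apply j)).add
        continuous_const))
  have hTint : IntegrableOn T (K n) volume := integrable_finset_sum _ fun i _ => hTi i
  have hTapp : Approx σ T := by
    rw [hT]
    exact approx_finset_sum hσm hσb _ _ (fun i _ => hTi i)
      (fun i _ => approx_smul hσm hσb (c i) (approx_ridge hσm hσb hC hbot htop (aa i) (bb i)))
  refine ⟨T, hTint, hTapp, ?_⟩
  have hTx : ∀ x : ↥(K n), T (x : Fin n → ℝ) = t x := by
    intro x
    rw [hT, ← hvsum]
    rw [ContinuousMap.sum_apply]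
    refine Finset.sum_congr rfl fun i _ => ?_
    rw [ContinuousMap.smul_apply, smul_eq_mul]
    congr 1
    rw [hab i]
    rfl
  have hbnd : ∀ᵐ x ∂((volume : Measure (Fin n → ℝ)).restrict (K n)),
      |T x - g x| ≤ δ / 2 := by
    refine (ae_restrict_iff' measurableSet_Icc).mpr (Filter.Eventually.of_forall fun x hx => ?_)
    have h1 : |T x - g x| = dist (t ⟨x, hx⟩) (gX ⟨x, hx⟩) := by
      rw [Real.dist_eq, hTx ⟨x, hx⟩]
      rfl
    rw [h1]
    exact le_trans (ContinuousMap.dist_apply_le_dist _) (by rw [dist_comm]; linarith)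
  calc (∫ x in K n, |T x - g x|)
      ≤ ∫ _x in K n, δ / 2 :=
        integral_mono_ae ((hTint.sub (hg.continuousOn.integrableOn_compact isCompact_Icc)).abs)
          (integrable_const _) hbnd
    _ = ((volume : Measure (Fin n → ℝ)) (K n)).toReal * (δ / 2) := by
        rw [setIntegral_const, smul_eq_mul, Measure.real]
    _ ≤ 1 * (δ / 2) := mul_le_mul_of_nonneg_right volume_K_le (by linarith)
    _ < δ := by linarith

include hσm hσb hC hbot htop in
lemma approx_integrable (f : (Fin n → ℝ) → ℝ)
    (hf : IntegrableOn f (Set.Icc 0 1) volume) : Approx σ f := by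
  refine approx_close hσm hσb hf ?_
  intro δ hδ
  set f0 : (Fin n → ℝ) → ℝ := (Set.Icc 0 1).indicator f with hf0def
  have hf0 : Integrable f0 volume :=
    (integrable_indicator_iff measurableSet_Icc).mpr hf
  obtain ⟨g, _, hgint2, hgc, hgint⟩ :=
    hf0.exists_hasCompactSupport_integral_sub_le (by linarith : (0:ℝ) < δ / 2)
  refine ⟨g, hgc.continuousOn.integrableOn_compact isCompact_Icc,
    approx_continuous hσm hσb hC hbot htop g hgc, ?_⟩
  have h1 : (∫ x in K n, |g x - f x|) = ∫ x in K n, ‖f0 x - g x‖ := by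
    refine setIntegral_congr_fun measurableSet_Icc fun x hx => ?_
    rw [hf0def, Set.indicator_of_mem hx, Real.norm_eq_abs, abs_sub_comm]
  rw [h1]
  have h2 : (∫ x in K n, ‖f0 x - g x‖) ≤ ∫ x, ‖f0 x - g x‖ := by
    refine setIntegral_le_integral (hf0.sub hgint).norm
      (Filter.Eventually.of_forall fun x => norm_nonneg _)
  linarith

end final

end MPS

/-- `L¹` universal approximation by activated MPS. For any bounded
Borel-measurable sigmoidal `σ` with `σ → 0` at `-∞` and `σ → C ≠ 0` at `+∞`, the class
`{x ↦ Σ_l c_l σ(p_l x)}` (with `p_l` multilinear polynomials) is dense in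
`L¹([0,1]ⁿ)` with respect to Lebesgue measure. -/
theorem activated_mps_dense_in_L1 (n : ℕ) (σ : ℝ → ℝ)
    (hσm : Measurable σ) (hσb : ∃ M, ∀ t, |σ t| ≤ M) (C : ℝ) (hC : C ≠ 0)
    (hbot : Filter.Tendsto σ Filter.atBot (nhds 0))
    (htop : Filter.Tendsto σ Filter.atTop (nhds C))
    (f : (Fin n → ℝ) → ℝ)
    (hf : IntegrableOn f (Set.Icc 0 1) volume)
    (ε : ℝ) (hε : 0 < ε) :
    ∃ (L : ℕ) (c : Fin L → ℝ) (p : Fin L → (Fin n → ℝ) → ℝ),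
      (∀ l, IsMultilinearPoly (p l)) ∧
      (∫ x in Set.Icc (0 : Fin n → ℝ) 1,
          |(∑ l : Fin L, c l * σ (p l x)) - f x|) < ε := by
  have happ : MPS.Approx σ f :=
    MPS.approx_integrable hσm hσb hC hbot htop f hf
  obtain ⟨F, ⟨L, c, p, hp, hFeq⟩, hFlt⟩ := happ ε hε
  refine ⟨L, c, p, hp, ?_⟩
  have heq : (∫ x in Set.Icc (0 : Fin n → ℝ) 1, |(∑ l : Fin L, c l * σ (p l x)) - f x|)
      = ∫ x in Set.Icc (0 : Fin n → ℝ) 1, |F x - f x| := by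
    refine integral_congr_ae (Filter.Eventually.of_forall fun x => ?_)
    simp only [hFeq x]
  rw [heq]
  exact hFlt
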